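/- Given a monoidal category M acting on a category C via an actegory structure •, parametrised morphisms form a category (up to 2-cells): the composite of (M, f : M•X → Y) and (N, g : N•Y → Z) with parameter N⊗M and morphism g ∘ (N•f) ∘ α (where α : (N⊗M)•X ≅ N•(M•X)) is associative and unital up to reparametrisation, i.e., Para(C) is a bicategory. -/

import Mathlib

set_option linter.unusedSectionVars false

open CategoryTheory MonoidalCategory

universe v₁ v₂ u₁ u₂

/-- An actegory: an action `• : M × C → C` together with coherent unit and
associativity isomorphisms satisfying pentagon and triangle coherence. -/
structure Actegory (M : Type u₁) (C : Type u₂) [Category.{v₁} M] [MonoidalCategory M]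
    [Category.{v₂} C] where
  act : M × C ⥤ C
  η : ∀ X : C, act.obj (𝟙_ M, X) ≅ X
  μ : ∀ (m n : M) (X : C), act.obj (m ⊗ n, X) ≅ act.obj (m, act.obj (n, X))
  η_nat : ∀ {X Y : C} (f : X ⟶ Y),
    act.map ((𝟙 (𝟙_ M), f) : (𝟙_ M, X) ⟶ (𝟙_ M, Y)) ≫ (η Y).hom = (η X).hom ≫ f
  μ_nat : ∀ {m m' n n' : M} {X Y : C} (h : m ⟶ m') (k : n ⟶ n') (f : X ⟶ Y),
    act.map ((h ⊗ₘ k, f) : (m ⊗ n, X) ⟶ (m' ⊗ n', Y)) ≫ (μ m' n' Y).hom =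
      (μ m n X).hom ≫ act.map ((h, act.map ((k, f) : (n, X) ⟶ (n', Y))) :
        (m, act.obj (n, X)) ⟶ (m', act.obj (n', Y)))
  pentagon : ∀ (m n p : M) (X : C),
    act.map (((α_ m n p).hom, 𝟙 X) : ((m ⊗ n) ⊗ p, X) ⟶ (m ⊗ (n ⊗ p), X)) ≫
        (μ m (n ⊗ p) X).hom ≫
        act.map ((𝟙 m, (μ n p X).hom) : (m, act.obj (n ⊗ p, X)) ⟶
          (m, act.obj (n, act.obj (p, X)))) =
      (μ (m ⊗ n) p X).hom ≫ (μ m n (act.obj (p, X))).hom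
  triangle : ∀ (m : M) (X : C),
    (μ m (𝟙_ M) X).hom ≫
        act.map ((𝟙 m, (η X).hom) : (m, act.obj (𝟙_ M, X)) ⟶ (m, X)) =
      act.map (((ρ_ m).hom, 𝟙 X) : (m ⊗ 𝟙_ M, X) ⟶ (m, X))

variable {M : Type u₁} {C : Type u₂} [Category.{v₁} M] [MonoidalCategory M]
  [Category.{v₂} C]

/-- Composite of the parametrised morphisms `(m, f : m•X ⟶ Y)` and
`(n, g : n•Y ⟶ Z)`: parameter `n ⊗ m`, morphism `g ∘ (n•f) ∘ α`. -/
def pComp (A : Actegory M C) {m n : M} {X Y Z : C}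
    (f : A.act.obj (m, X) ⟶ Y) (g : A.act.obj (n, Y) ⟶ Z) :
    A.act.obj (n ⊗ m, X) ⟶ Z :=
  (A.μ n m X).hom ≫
    A.act.map ((𝟙 n, f) : (n, A.act.obj (m, X)) ⟶ (n, Y)) ≫ g

/-- The identity parametrised morphism `(I, I•X ≅ X)`. -/
def pId (A : Actegory M C) (X : C) : A.act.obj (𝟙_ M, X) ⟶ X := (A.η X).hom

section Aux

lemma para_map_snd_comp (F : M × C ⥤ C) (m : M) {X Y Z : C} (a : X ⟶ Y) (b : Y ⟶ Z) :
    F.map ((𝟙 m, a ≫ b) : (m, X) ⟶ (m, Z)) =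
      F.map ((𝟙 m, a) : (m, X) ⟶ (m, Y)) ≫ F.map ((𝟙 m, b) : (m, Y) ⟶ (m, Z)) := by
  rw [← F.map_comp]
  congr 1
  apply Prod.ext <;> simp

lemma para_map_fst_comp (F : M × C ⥤ C) {a b c : M} (u : a ⟶ b) (v : b ⟶ c) (X : C) :
    F.map ((u, 𝟙 X) : (a, X) ⟶ (b, X)) ≫ F.map ((v, 𝟙 X) : (b, X) ⟶ (c, X)) =
      F.map ((u ≫ v, 𝟙 X) : (a, X) ⟶ (c, X)) := by
  rw [← F.map_comp]
  congr 1
  apply Prod.ext <;> simp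

lemma para_map_id (F : M × C ⥤ C) (m : M) (X : C) :
    F.map ((𝟙 m, 𝟙 X) : (m, X) ⟶ (m, X)) = 𝟙 (F.obj (m, X)) := by
  have : ((𝟙 m, 𝟙 X) : (m, X) ⟶ (m, X)) = 𝟙 (Prod.mk m X) := by
    apply Prod.ext <;> simp
  rw [this, F.map_id]

lemma para_map_iso (F : M × C ⥤ C) {m m' : M} {X : C} (f : m ≅ m') :
    IsIso (F.map ((f.hom, 𝟙 X) : (m, X) ⟶ (m', X))) := by
  have h1 : ((f.hom, 𝟙 X) : Prod.mk m X ⟶ Prod.mk m' X) ≫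
      ((f.inv, 𝟙 X) : Prod.mk m' X ⟶ Prod.mk m X) = 𝟙 (Prod.mk m X) := by
    apply Prod.ext <;> simp
  have h2 : ((f.inv, 𝟙 X) : Prod.mk m' X ⟶ Prod.mk m X) ≫
      ((f.hom, 𝟙 X) : Prod.mk m X ⟶ Prod.mk m' X) = 𝟙 (Prod.mk m' X) := by
    apply Prod.ext <;> simp
  exact ⟨F.map ((f.inv, 𝟙 X) : Prod.mk m' X ⟶ Prod.mk m X),
    by rw [← F.map_comp, h1, F.map_id], by rw [← F.map_comp, h2, F.map_id]⟩

/-- The derived λ-axiom of an actegory (Kelly's argument). -/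
lemma para_act_lambda (A : Actegory M C) (m : M) (X : C) :
    (A.μ (𝟙_ M) m X).hom ≫ (A.η (A.act.obj (m, X))).hom =
      A.act.map (((λ_ m).hom, 𝟙 X) : (𝟙_ M ⊗ m, X) ⟶ (m, X)) := by
  set F := A.act with hF
  -- abbreviations
  set a : F.obj (𝟙_ M ⊗ m, X) ⟶ F.obj (m, X) :=
    (A.μ (𝟙_ M) m X).hom ≫ (A.η (F.obj (m, X))).hom with ha
  set b : F.obj (𝟙_ M ⊗ m, X) ⟶ F.obj (m, X) :=
    F.map (((λ_ m).hom, 𝟙 X) : (𝟙_ M ⊗ m, X) ⟶ (m, X)) with hb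
  -- Step 1: I • a = I • b (after precomposing with isos).
  have key : F.map ((𝟙 (𝟙_ M), a) : (𝟙_ M, F.obj (𝟙_ M ⊗ m, X)) ⟶ (𝟙_ M, F.obj (m, X))) =
      F.map ((𝟙 (𝟙_ M), b) : (𝟙_ M, F.obj (𝟙_ M ⊗ m, X)) ⟶ (𝟙_ M, F.obj (m, X))) := by
    haveI := para_map_iso F (X := X) (α_ (𝟙_ M) (𝟙_ M) m)
    rw [← cancel_epi (A.μ (𝟙_ M) (𝟙_ M ⊗ m) X).hom,
      ← cancel_epi (F.map (((α_ (𝟙_ M) (𝟙_ M) m).hom, 𝟙 X) :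
      ((𝟙_ M ⊗ 𝟙_ M) ⊗ m, X) ⟶ (𝟙_ M ⊗ (𝟙_ M ⊗ m), X)))]
    -- LHS computation
    have e1 : F.map (((α_ (𝟙_ M) (𝟙_ M) m).hom, 𝟙 X) :
        ((𝟙_ M ⊗ 𝟙_ M) ⊗ m, X) ⟶ (𝟙_ M ⊗ (𝟙_ M ⊗ m), X)) ≫
        (A.μ (𝟙_ M) (𝟙_ M ⊗ m) X).hom ≫
        F.map ((𝟙 (𝟙_ M), a) : (𝟙_ M, F.obj (𝟙_ M ⊗ m, X)) ⟶ (𝟙_ M, F.obj (m, X))) =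
        F.map (((ρ_ (𝟙_ M)).hom ⊗ₘ 𝟙 m, 𝟙 X) :
          ((𝟙_ M ⊗ 𝟙_ M) ⊗ m, X) ⟶ (𝟙_ M ⊗ m, X)) ≫ (A.μ (𝟙_ M) m X).hom := by
      rw [ha, para_map_snd_comp]
      simp only [Category.assoc]
      -- pentagon at (𝟙,𝟙,m)
      have hp := A.pentagon (𝟙_ M) (𝟙_ M) m X
      rw [reassoc_of% hp]
      -- triangle at (𝟙, m•X)
      have ht := A.triangle (𝟙_ M) (F.obj (m, X))
      rw [ht]
      -- μ-naturality at (ρ_𝟙, 𝟙 m)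
      have hn := A.μ_nat (ρ_ (𝟙_ M)).hom (𝟙 m) (𝟙 X)
      rw [para_map_id] at hn
      exact hn.symm
    -- RHS computation
    have e2 : F.map (((α_ (𝟙_ M) (𝟙_ M) m).hom, 𝟙 X) :
        ((𝟙_ M ⊗ 𝟙_ M) ⊗ m, X) ⟶ (𝟙_ M ⊗ (𝟙_ M ⊗ m), X)) ≫
        (A.μ (𝟙_ M) (𝟙_ M ⊗ m) X).hom ≫
        F.map ((𝟙 (𝟙_ M), b) : (𝟙_ M, F.obj (𝟙_ M ⊗ m, X)) ⟶ (𝟙_ M, F.obj (m, X))) =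
        F.map (((ρ_ (𝟙_ M)).hom ⊗ₘ 𝟙 m, 𝟙 X) :
          ((𝟙_ M ⊗ 𝟙_ M) ⊗ m, X) ⟶ (𝟙_ M ⊗ m, X)) ≫ (A.μ (𝟙_ M) m X).hom := by
      have hn := A.μ_nat (𝟙 (𝟙_ M)) (λ_ m).hom (𝟙 X)
      rw [hb, ← hn, ← Category.assoc,
        para_map_fst_comp F (α_ (𝟙_ M) (𝟙_ M) m).hom ((𝟙 (𝟙_ M)) ⊗ₘ (λ_ m).hom) X]
      have htri : (α_ (𝟙_ M) (𝟙_ M) m).hom ≫ ((𝟙 (𝟙_ M)) ⊗ₘ (λ_ m).hom) =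
          (ρ_ (𝟙_ M)).hom ⊗ₘ 𝟙 m := by
        simp [MonoidalCategory.id_tensorHom, MonoidalCategory.tensorHom_id]
        monoidal
      rw [htri]
    rw [e1, e2]
  -- Step 2: deduce a = b via η-naturality.
  have na := A.η_nat a
  have nb := A.η_nat b
  rw [key] at na
  rw [na] at nb
  exact (Iso.cancel_iso_hom_left (A.η (F.obj (𝟙_ M ⊗ m, X))) a b).mp nb

end Aux

theorem para_bicategory (A : Actegory M C) :
    (∀ {m n p : M} {X Y Z W : C} (f : A.act.obj (m, X) ⟶ Y)
      (g : A.act.obj (n, Y) ⟶ Z) (h : A.act.obj (p, Z) ⟶ W),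
      pComp A f (pComp A g h) =
        A.act.map (((α_ p n m).hom, 𝟙 X) : ((p ⊗ n) ⊗ m, X) ⟶ (p ⊗ (n ⊗ m), X)) ≫
          pComp A (pComp A f g) h) ∧
    (∀ {m : M} {X Y : C} (f : A.act.obj (m, X) ⟶ Y),
      pComp A (pId A X) f =
        A.act.map (((ρ_ m).hom, 𝟙 X) : (m ⊗ 𝟙_ M, X) ⟶ (m, X)) ≫ f) ∧
    (∀ {m : M} {X Y : C} (f : A.act.obj (m, X) ⟶ Y),
      pComp A f (pId A Y) =
        A.act.map (((λ_ m).hom, 𝟙 X) : (𝟙_ M ⊗ m, X) ⟶ (m, X)) ≫ f) := by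
  refine ⟨?_, ?_, ?_⟩
  · intro m n p X Y Z W f g h
    simp only [pComp, para_map_snd_comp, Category.assoc]
    -- naturality step on the left-hand side
    have hnat : A.act.map ((𝟙 (p ⊗ n), f) : (p ⊗ n, A.act.obj (m, X)) ⟶ (p ⊗ n, Y)) ≫
        (A.μ p n Y).hom = (A.μ p n (A.act.obj (m, X))).hom ≫
        A.act.map ((𝟙 p, A.act.map ((𝟙 n, f) : (n, A.act.obj (m, X)) ⟶ (n, Y))) :
          (p, A.act.obj (n, A.act.obj (m, X))) ⟶ (p, A.act.obj (n, Y))) := by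
      have := A.μ_nat (𝟙 p) (𝟙 n) f
      rw [MonoidalCategory.id_tensorHom_id] at this
      exact this
    rw [para_map_snd_comp A.act p ((A.μ n m X).hom)
      (A.act.map ((𝟙 n, f) : (n, A.act.obj (m, X)) ⟶ (n, Y)) ≫ g),
      para_map_snd_comp A.act p (A.act.map ((𝟙 n, f) : (n, A.act.obj (m, X)) ⟶ (n, Y))) g]
    rw [reassoc_of% hnat]
    have hp := A.pentagon p n m X
    rw [← reassoc_of% hp]
    simp only [Category.assoc]
  · intro m X Y f
    simp only [pComp, pId]
    rw [← Category.assoc, A.triangle]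
  · intro m X Y f
    simp only [pComp, pId]
    rw [A.η_nat f, ← Category.assoc, para_act_lambda]
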